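/- arXiv:2303.09642 — 2 statements merged into one kernel-verified Lean document; each statement's English description precedes it below -/
import Mathlib

section
/- In one dimension, Tweedie's formula holds: if x has density p on ℝ, ν ~ N(0,σ²) is independent of x, and q(r) = ∫ p(t) φ_σ(r − t) dt is the density of r = x + ν (with φ_σ the N(0,σ²) density), then E[x | x + ν = r] = r + σ² q'(r)/q(r) whenever q(r) > 0. -/
set_option maxHeartbeats 1000000


open MeasureTheory Real

/-- Tweedie's formula in one dimension. -/
theorem tweedie_formula_one_dim
    (σ : ℝ) (hσ : 0 < σ)
    (p : ℝ → ℝ)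
    (hp_meas : Measurable p)
    (hp_nonneg : ∀ t, 0 ≤ p t)
    (hp_int : ∫ t, p t = 1)
    (hp_mom : Integrable (fun t => |t| * p t))
    (φ : ℝ → ℝ)
    (hφ : ∀ u, φ u = (σ * Real.sqrt (2 * π))⁻¹ * Real.exp (-u ^ 2 / (2 * σ ^ 2)))
    (q : ℝ → ℝ)
    (hq : ∀ r, q r = ∫ t, p t * φ (r - t))
    (D : ℝ → ℝ)
    (hD : ∀ r, D r = (∫ t, t * p t * φ (r - t)) / q r)
    (r : ℝ) (hr : 0 < q r) :
    D r = r + σ ^ 2 * (deriv q r / q r) := by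
  set c : ℝ := (σ * Real.sqrt (2 * π))⁻¹ with hc_def
  have hπ : 0 < Real.sqrt (2 * π) := Real.sqrt_pos.2 (by positivity)
  have hc : 0 < c := by positivity
  have hφ_eq : φ = fun u => c * Real.exp (-u ^ 2 / (2 * σ ^ 2)) := funext hφ
  have hφ_cont : Continuous φ := by rw [hφ_eq]; continuity
  have hφ_nonneg : ∀ u, 0 ≤ φ u := by
    intro u; rw [hφ u]; positivity
  have hφ_le : ∀ u, φ u ≤ c := by
    intro u
    rw [hφ u]
    have : Real.exp (-u ^ 2 / (2 * σ ^ 2)) ≤ 1 := by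
      rw [Real.exp_le_one_iff, neg_div]
      exact neg_nonpos.2 (by positivity)
    nlinarith [hc.le]
  -- p is integrable
  have hp_integrable : Integrable p := by
    by_contra h
    rw [integral_undef h] at hp_int
    norm_num at hp_int
  -- gaussian bound
  have hgauss : ∀ u : ℝ, |u| * Real.exp (-u ^ 2 / (2 * σ ^ 2)) ≤ 2 * σ := by
    intro u
    rcases le_or_gt (|u|) (2 * σ) with h | h
    · have h1 : Real.exp (-u ^ 2 / (2 * σ ^ 2)) ≤ 1 := by
        rw [Real.exp_le_one_iff, neg_div]
        exact neg_nonpos.2 (by positivity)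
      nlinarith [abs_nonneg u]
    · have hu : 0 < |u| := lt_trans (by positivity) h
      have hune : u ≠ 0 := abs_pos.mp hu
      have hu2 : 0 < u ^ 2 := pow_pos (abs_pos.mpr hune) 2 |>.trans_eq (by rw [sq_abs])
      have hv : 0 < u ^ 2 / (2 * σ ^ 2) := div_pos hu2 (by positivity)
      have h1 : u ^ 2 / (2 * σ ^ 2) ≤ Real.exp (u ^ 2 / (2 * σ ^ 2)) := by
        linarith [Real.add_one_le_exp (u ^ 2 / (2 * σ ^ 2))]
      have h2 : Real.exp (-u ^ 2 / (2 * σ ^ 2)) ≤ (u ^ 2 / (2 * σ ^ 2))⁻¹ := by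
        rw [neg_div, Real.exp_neg]
        exact inv_anti₀ hv h1
      have h3 : (u ^ 2 / (2 * σ ^ 2))⁻¹ = 2 * σ ^ 2 / u ^ 2 := by
        field_simp
      have h4 : |u| * Real.exp (-u ^ 2 / (2 * σ ^ 2)) ≤ |u| * (2 * σ ^ 2 / u ^ 2) := by
        rw [← h3] at *
        exact mul_le_mul_of_nonneg_left h2 (abs_nonneg u)
      have h5 : |u| * (2 * σ ^ 2 / u ^ 2) = 2 * σ ^ 2 / |u| := by
        field_simp
        linear_combination sq_abs u
      have h6 : 2 * σ ^ 2 / |u| ≤ 2 * σ ^ 2 / (2 * σ) := by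
        apply div_le_div_of_nonneg_left (by positivity) (by positivity) h.le
      have h7 : 2 * σ ^ 2 / (2 * σ) = σ := by field_simp
      nlinarith [h4, h5, h6]
  -- derivative of translated gaussian
  have hφ_deriv : ∀ (t x : ℝ),
      HasDerivAt (fun x => φ (x - t)) ((-(x - t) / σ ^ 2) * φ (x - t)) x := by
    intro t x
    have h0 : HasDerivAt (fun x : ℝ => x - t) 1 x := (hasDerivAt_id x).sub_const t
    have h2 : HasDerivAt (fun x : ℝ => (x - t) ^ 2) (2 * (x - t)) x := by
      simpa using h0.fun_pow 2
    have h1 : HasDerivAt (fun x : ℝ => -(x - t) ^ 2 / (2 * σ ^ 2)) (-(x - t) / σ ^ 2) x := by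
      have h3 := (h2.neg).div_const (2 * σ ^ 2)
      refine h3.congr_deriv ?_
      field_simp
    have h4 := (h1.exp).const_mul c
    rw [hφ_eq]
    refine h4.congr_deriv ?_
    beta_reduce
    ring
  -- measurability
  have hmeas : ∀ x : ℝ, AEStronglyMeasurable (fun t => p t * φ (x - t)) volume := fun x =>
    (hp_meas.mul (hφ_cont.measurable.comp (measurable_const.sub measurable_id))).aestronglyMeasurable
  -- integrability of F x₀
  have hF_int : Integrable (fun t => p t * φ (r - t)) := by
    apply Integrable.mono' (hp_integrable.const_mul c) (hmeas r)
    filter_upwards with t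
    rw [Real.norm_eq_abs, abs_of_nonneg (mul_nonneg (hp_nonneg t) (hφ_nonneg _))]
    calc p t * φ (r - t) ≤ p t * c := mul_le_mul_of_nonneg_left (hφ_le _) (hp_nonneg t)
      _ = c * p t := mul_comm _ _
  -- integrability of t * p t * φ (r - t)
  have hI1 : Integrable (fun t => t * p t * φ (r - t)) := by
    apply Integrable.mono' (hp_mom.const_mul c)
    · exact ((measurable_id.mul hp_meas).mul
        (hφ_cont.measurable.comp (measurable_const.sub measurable_id))).aestronglyMeasurable
    · filter_upwards with t
      rw [Real.norm_eq_abs, abs_mul, abs_mul, abs_of_nonneg (hp_nonneg t),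
        abs_of_nonneg (hφ_nonneg _)]
      calc |t| * p t * φ (r - t) ≤ |t| * p t * c :=
            mul_le_mul_of_nonneg_left (hφ_le _) (mul_nonneg (abs_nonneg t) (hp_nonneg t))
        _ = c * (|t| * p t) := by ring
  -- differentiation under the integral sign
  have hq_deriv : HasDerivAt (fun x => ∫ t, p t * φ (x - t))
      (∫ t, p t * ((-(r - t) / σ ^ 2) * φ (r - t))) r := by
    have H := hasDerivAt_integral_of_dominated_loc_of_deriv_le (F := fun x t => p t * φ (x - t))
      (F' := fun x t => p t * ((-(x - t) / σ ^ 2) * φ (x - t)))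
      (bound := fun t => (c / σ ^ 2 * (2 * σ)) * p t) (μ := volume) (x₀ := r)
      (s := Metric.ball r 1) (Metric.ball_mem_nhds r one_pos)
      (Filter.Eventually.of_forall fun x => hmeas x)
      hF_int
      ?_ ?_ ?_ ?_
    · exact H.2
    · have hm : Measurable (fun t : ℝ => p t * (-(r - t) / σ ^ 2 * φ (r - t))) := by
        have hm1 : Measurable (fun t : ℝ => -(r - t) / σ ^ 2) := by fun_prop
        have hm2 : Measurable (fun t : ℝ => φ (r - t)) :=
          hφ_cont.measurable.comp (measurable_const.sub measurable_id)
        exact hp_meas.mul (hm1.mul hm2)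
      exact hm.aestronglyMeasurable
    · filter_upwards with t
      intro x _
      rw [Real.norm_eq_abs, abs_mul, abs_of_nonneg (hp_nonneg t), abs_mul, abs_div, abs_neg]
      have hσ2 : |σ ^ 2| = σ ^ 2 := abs_of_pos (by positivity)
      rw [hσ2, abs_of_nonneg (hφ_nonneg _)]
      have hb : |x - t| / σ ^ 2 * φ (x - t) ≤ c / σ ^ 2 * (2 * σ) := by
        rw [hφ (x - t)]
        have := hgauss (x - t)
        rw [div_mul_eq_mul_div, div_mul_eq_mul_div, div_le_div_iff₀ (by positivity) (by positivity)]
        calc |x - t| * (c * Real.exp (-(x - t) ^ 2 / (2 * σ ^ 2))) * σ ^ 2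
            = (|x - t| * Real.exp (-(x - t) ^ 2 / (2 * σ ^ 2))) * (c * σ ^ 2) := by ring
          _ ≤ (2 * σ) * (c * σ ^ 2) := by
              apply mul_le_mul_of_nonneg_right this (by positivity)
          _ = c * (2 * σ) * σ ^ 2 := by ring
      calc p t * (|x - t| / σ ^ 2 * φ (x - t)) ≤ p t * (c / σ ^ 2 * (2 * σ)) :=
            mul_le_mul_of_nonneg_left hb (hp_nonneg t)
        _ = c / σ ^ 2 * (2 * σ) * p t := by ring
    · exact (hp_integrable.const_mul _)
    · filter_upwards with t
      intro x _
      exact (hφ_deriv t x).const_mul (p t)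
  have hq_fun : q = fun x => ∫ t, p t * φ (x - t) := funext hq
  have hderiv : deriv q r = ∫ t, p t * ((-(r - t) / σ ^ 2) * φ (r - t)) := by
    rw [hq_fun]
    exact hq_deriv.deriv
  -- compute the derivative integral
  have hσ2ne : (σ ^ 2 : ℝ) ≠ 0 := by positivity
  have hsplit : (fun t => p t * ((-(r - t) / σ ^ 2) * φ (r - t)))
      = fun t => (σ ^ 2)⁻¹ * (t * p t * φ (r - t) - r * (p t * φ (r - t))) := by
    funext t
    field_simp
    ring
  have hval : (∫ t, p t * ((-(r - t) / σ ^ 2) * φ (r - t)))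
      = (σ ^ 2)⁻¹ * ((∫ t, t * p t * φ (r - t)) - r * q r) := by
    rw [hsplit, MeasureTheory.integral_const_mul, integral_sub hI1 (hF_int.const_mul r),
      MeasureTheory.integral_const_mul, hq r]
  rw [hD r, hderiv, hval]
  have hqne : q r ≠ 0 := ne_of_gt hr
  field_simp
  ring
end

section
/- The denoiser residual equals the scaled score: under the hypotheses of Tweedie's formula in one dimension, the score of the smoothed density satisfies (log q)'(r) = (D_σ(r) − r)/σ², where D_σ(r) = E[x | x + ν = r] and q is the density of x + ν. -/
open MeasureTheory Real

/-- The denoiser residual equals the scaled score: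
`(log q)'(r) = (D_σ(r) − r) / σ²` in one dimension. -/
theorem score_eq_denoiser_residual
    (σ : ℝ) (hσ : 0 < σ)
    (p : ℝ → ℝ)
    (hp_meas : Measurable p)
    (hp_nonneg : ∀ t, 0 ≤ p t)
    (hp_int : ∫ t, p t = 1)
    (hp_mom : Integrable (fun t => |t| * p t))
    (φ : ℝ → ℝ)
    (hφ : ∀ u, φ u = (σ * Real.sqrt (2 * π))⁻¹ * Real.exp (-u ^ 2 / (2 * σ ^ 2)))
    (q : ℝ → ℝ)
    (hq : ∀ r, q r = ∫ t, p t * φ (r - t))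
    (D : ℝ → ℝ)
    (hD : ∀ r, D r = (∫ t, t * p t * φ (r - t)) / q r)
    (r : ℝ) (hr : 0 < q r) :
    deriv (fun s => Real.log (q s)) r = (D r - r) / σ ^ 2 := by
  have hφeq : φ = fun u => (σ * Real.sqrt (2 * π))⁻¹ * Real.exp (-u ^ 2 / (2 * σ ^ 2)) :=
    funext hφ
  set c : ℝ := (σ * Real.sqrt (2 * π))⁻¹ with hc
  have hc_pos : 0 < c := by
    apply inv_pos.2
    positivity
  have hφ_nonneg : ∀ u, 0 ≤ φ u := by
    intro u; rw [hφ]; positivity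
  have hφ_le : ∀ u, φ u ≤ c := by
    intro u; rw [hφ]
    calc c * Real.exp (-u ^ 2 / (2 * σ ^ 2)) ≤ c * 1 := by
          apply mul_le_mul_of_nonneg_left _ hc_pos.le
          rw [Real.exp_le_one_iff]
          apply div_nonpos_of_nonpos_of_nonneg <;> [skip; positivity]
          simp [sq_nonneg u]
        _ = c := mul_one c
  have hφ_meas : Measurable φ := by
    rw [hφeq]; fun_prop
  -- key bound: |u| * φ u ≤ σ * c
  have key : ∀ u : ℝ, |u| * φ u ≤ σ * c := by
    intro u
    rw [hφ]
    have h2 : |u| ≤ σ * Real.exp (u ^ 2 / (2 * σ ^ 2)) := by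
      have h0 : |u| * (2 * σ) ≤ (σ + σ * (u ^ 2 / (2 * σ ^ 2))) * (2 * σ) := by
        have e : (σ + σ * (u ^ 2 / (2 * σ ^ 2))) * (2 * σ) = 2 * σ ^ 2 + u ^ 2 := by
          field_simp
        rw [e]
        nlinarith [sq_nonneg (|u| - σ), sq_abs u]
      have h0' := le_of_mul_le_mul_right h0 (by positivity : (0:ℝ) < 2 * σ)
      calc |u| ≤ σ + σ * (u ^ 2 / (2 * σ ^ 2)) := h0'
        _ = σ * (1 + u ^ 2 / (2 * σ ^ 2)) := by ring
        _ ≤ σ * Real.exp (u ^ 2 / (2 * σ ^ 2)) := by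
            apply mul_le_mul_of_nonneg_left _ hσ.le
            have := Real.add_one_le_exp (u ^ 2 / (2 * σ ^ 2))
            linarith
    have h1 : |u| * Real.exp (-u ^ 2 / (2 * σ ^ 2)) ≤ σ := by
      calc |u| * Real.exp (-u ^ 2 / (2 * σ ^ 2))
          ≤ σ * Real.exp (u ^ 2 / (2 * σ ^ 2)) * Real.exp (-u ^ 2 / (2 * σ ^ 2)) :=
            mul_le_mul_of_nonneg_right h2 (Real.exp_nonneg _)
        _ = σ := by rw [mul_assoc, ← Real.exp_add, ← add_div]; simp
    calc |u| * (c * Real.exp (-u ^ 2 / (2 * σ ^ 2)))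
        = (|u| * Real.exp (-u ^ 2 / (2 * σ ^ 2))) * c := by ring
      _ ≤ σ * c := mul_le_mul_of_nonneg_right h1 hc_pos.le
  -- p integrable
  have hpInt : Integrable p := by
    by_contra h
    rw [integral_undef h] at hp_int
    norm_num at hp_int
  -- integrability of the integrands
  have hmeas1 : ∀ s : ℝ, Measurable fun t => p t * φ (s - t) := fun s =>
    hp_meas.mul (hφ_meas.comp (measurable_const.sub measurable_id))
  have hmeas2 : Measurable fun t => t * p t * φ (r - t) :=
    (measurable_id.mul hp_meas).mul (hφ_meas.comp (measurable_const.sub measurable_id))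
  have hInt1 : ∀ s : ℝ, Integrable (fun t => p t * φ (s - t)) := by
    intro s
    apply ((hpInt.const_mul c).mono (hmeas1 s).aestronglyMeasurable)
    filter_upwards with t
    rw [Real.norm_eq_abs, Real.norm_eq_abs, abs_mul, abs_of_nonneg (hp_nonneg t),
      abs_of_nonneg (hφ_nonneg _), abs_mul, abs_of_nonneg hc_pos.le,
      abs_of_nonneg (hp_nonneg t), mul_comm c]
    exact mul_le_mul_of_nonneg_left (hφ_le _) (hp_nonneg t)
  have hInt2 : Integrable (fun t => t * p t * φ (r - t)) := by
    apply ((hp_mom.const_mul c).mono hmeas2.aestronglyMeasurable)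
    filter_upwards with t
    have h : |t * p t * φ (r - t)| = |t| * p t * φ (r - t) := by
      rw [abs_mul, abs_mul, abs_of_nonneg (hp_nonneg t), abs_of_nonneg (hφ_nonneg _)]
    rw [Real.norm_eq_abs, Real.norm_eq_abs, h,
      abs_of_nonneg (mul_nonneg hc_pos.le (mul_nonneg (abs_nonneg t) (hp_nonneg t)))]
    calc |t| * p t * φ (r - t) ≤ |t| * p t * c :=
          mul_le_mul_of_nonneg_left (hφ_le _) (mul_nonneg (abs_nonneg t) (hp_nonneg t))
      _ = c * (|t| * p t) := by ring
  -- F' bound integrand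
  have hF'bd : Integrable (fun t => p t * (c / σ)) := hpInt.mul_const _
  -- hasDerivAt for the integral
  have hderivφ : ∀ (t s : ℝ), HasDerivAt (fun x => φ (x - t))
      (-((s - t) / σ ^ 2) * φ (s - t)) s := by
    intro t s
    have h1 : HasDerivAt (fun x : ℝ => -(x - t) ^ 2 / (2 * σ ^ 2))
        (-((s - t) / σ ^ 2)) s := by
      have h0 : HasDerivAt (fun x : ℝ => x - t) 1 s := by
        simpa using (hasDerivAt_id s).sub_const t
      have := ((h0.pow 2).neg).div_const (2 * σ ^ 2)
      refine this.congr_deriv ?_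
      field_simp
      ring
    have h2 := (h1.exp).const_mul c
    have : (fun x => φ (x - t)) = fun x => c * Real.exp (-(x - t) ^ 2 / (2 * σ ^ 2)) := by
      funext x; rw [hφ]
    rw [this, hφ]
    exact h2.congr_deriv (by ring)
  have main := hasDerivAt_integral_of_dominated_loc_of_deriv_le
    (F := fun s t => p t * φ (s - t))
    (F' := fun s t => p t * (-((s - t) / σ ^ 2) * φ (s - t)))
    (bound := fun t => p t * (c / σ))
    (μ := volume) (x₀ := r) (Metric.ball_mem_nhds r one_pos)
    (Filter.Eventually.of_forall fun s => (hInt1 s).aestronglyMeasurable)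
    (hInt1 r)
    (hp_meas.mul ((((measurable_const.sub measurable_id).div_const _).neg).mul
      (hφ_meas.comp (measurable_const.sub measurable_id)))).aestronglyMeasurable
    (by
      filter_upwards with t s _
      rw [Real.norm_eq_abs, abs_mul, abs_of_nonneg (hp_nonneg t), abs_mul,
        abs_neg, abs_div, abs_of_nonneg (hφ_nonneg _)]
      apply mul_le_mul_of_nonneg_left _ (hp_nonneg t)
      rw [abs_of_nonneg (by positivity : (0:ℝ) ≤ σ ^ 2), div_mul_eq_mul_div,
        div_le_div_iff₀ (by positivity) hσ]
      calc |s - t| * φ (s - t) * σ ≤ σ * c * σ :=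
            mul_le_mul_of_nonneg_right (key _) hσ.le
        _ = c * σ ^ 2 := by ring)
    hF'bd
    (by
      filter_upwards with t s _
      exact ((hderivφ t s).const_mul (p t)))
  obtain ⟨hF'int, hqderiv⟩ := main
  -- q has derivative
  have hqd : HasDerivAt q (∫ t, p t * (-((r - t) / σ ^ 2) * φ (r - t))) r := by
    have : q = fun s => ∫ t, p t * φ (s - t) := funext hq
    rw [this]; exact hqderiv
  -- compute the integral value
  have hval : (∫ t, p t * (-((r - t) / σ ^ 2) * φ (r - t)))
      = (D r * q r - r * q r) / σ ^ 2 := by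
    have hsplit : (fun t => p t * (-((r - t) / σ ^ 2) * φ (r - t)))
        = fun t => (t * p t * φ (r - t)) / σ ^ 2 - r * ((p t * φ (r - t)) / σ ^ 2) := by
      funext t
      field_simp
      ring
    rw [hsplit, integral_sub (hInt2.div_const _) (((hInt1 r).div_const _).const_mul r),
      integral_div, integral_const_mul, integral_div]
    have hDq : D r * q r = ∫ t, t * p t * φ (r - t) := by
      rw [hD, div_mul_cancel₀]
      exact hr.ne'
    rw [← hDq, ← hq]
    ring
  -- conclude
  have hlog := (hqd.log hr.ne')
  rw [hlog.deriv, hval]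
  field_simp
end
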